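/- Setting the single-hop relation ε = 1 − G exp(−λγK R^2) and solving for the density yields λγ(1−ε) = (1−ε)/(KR^2) · ln(G/(1−ε)); hence the transmission-capacity upper bound for predetermined m-relay routing, obtained by setting λγ(1−ε)/(m+1) equal to its maximum subject to 1−ε ≤ G exp(−λγKR^2/(m+1)), equals (1−ε)/(KR^2) · ln(G/(1−ε)), independent of m. -/

import Mathlib

/-- Predetermined multihop routing gives no throughput gain over single hop:
(1) solving 1−ε = G e^{−λγKR²} gives λγ(1−ε) = (1−ε)/(KR²)·ln(G/(1−ε));
(2) for any number of relays m, the greatest achievable normalized density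
λγ(1−ε)/(m+1) subject to 1−ε ≤ G e^{−λγKR²/(m+1)}, λ ≥ 0, equals the same
single-hop value (1−ε)/(KR²)·ln(G/(1−ε)), independent of m. -/
theorem predetermined_routing_no_gain (G K R γ ε : ℝ)
    (hK : 0 < K) (hR : 0 < R) (hγ0 : 0 < γ) (hγ1 : γ < 1)
    (hε0 : 0 < ε) (hε1 : ε < 1) (hG : 1 - ε ≤ G) :
    (∀ lam : ℝ, 1 - ε = G * Real.exp (-(lam * γ * K) * R ^ 2) →
      lam * γ * (1 - ε) = (1 - ε) / (K * R ^ 2) * Real.log (G / (1 - ε))) ∧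
    (∀ m : ℕ,
      IsGreatest
        {x : ℝ | ∃ lam : ℝ, 0 ≤ lam ∧
          1 - ε ≤ G * Real.exp (-(lam * γ * K) * R ^ 2 / (m + 1)) ∧
          x = lam * γ * (1 - ε) / (m + 1)}
        ((1 - ε) / (K * R ^ 2) * Real.log (G / (1 - ε)))) := by
  have h1ε : (0:ℝ) < 1 - ε := by linarith
  have hGpos : (0:ℝ) < G := lt_of_lt_of_le h1ε hG
  have hc : (0:ℝ) < K * R ^ 2 := by positivity
  have hL : 0 ≤ Real.log (G / (1 - ε)) := Real.log_nonneg ((one_le_div h1ε).2 hG)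
  have hlogdiv : Real.log (G / (1 - ε)) = Real.log G - Real.log (1 - ε) :=
    Real.log_div (ne_of_gt hGpos) (ne_of_gt h1ε)
  constructor
  · intro lam heq
    have hlog : Real.log (1 - ε) = Real.log G + (-(lam * γ * K) * R ^ 2) := by
      rw [heq, Real.log_mul (ne_of_gt hGpos) (Real.exp_ne_zero _), Real.log_exp]
    have : lam * γ * (K * R ^ 2) = Real.log (G / (1 - ε)) := by
      rw [hlogdiv]; nlinarith [hlog]
    field_simp
    nlinarith [this]
  · intro m
    have hm : (0:ℝ) < (m:ℝ) + 1 := by positivity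
    constructor
    · refine ⟨(m + 1) * Real.log (G / (1 - ε)) / (γ * (K * R ^ 2)), by positivity, ?_, ?_⟩
      · have harg : -((m + 1) * Real.log (G / (1 - ε)) / (γ * (K * R ^ 2)) * γ * K) * R ^ 2
            / (m + 1) = -Real.log (G / (1 - ε)) := by
          field_simp
        rw [harg, Real.exp_neg, Real.exp_log (by positivity)]
        have : G * (G / (1 - ε))⁻¹ = 1 - ε := by field_simp
        rw [this]
      · field_simp
    · rintro x ⟨lam, hlam, hcon, rfl⟩
      have hlog : Real.log (1 - ε) ≤ Real.log G + (-(lam * γ * K) * R ^ 2 / (m + 1)) := by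
        calc Real.log (1 - ε)
            ≤ Real.log (G * Real.exp (-(lam * γ * K) * R ^ 2 / (m + 1))) :=
              Real.log_le_log h1ε hcon
          _ = _ := by
              rw [Real.log_mul (ne_of_gt hGpos) (Real.exp_ne_zero _), Real.log_exp]
      have h2 : lam * γ * K * R ^ 2 / (m + 1) ≤ Real.log G - Real.log (1 - ε) := by
        rw [neg_mul, neg_div] at hlog; linarith
      rw [div_le_iff₀ hm] at h2
      have hkey : lam * γ * (K * R ^ 2) ≤ Real.log (G / (1 - ε)) * (m + 1) := by
        rw [hlogdiv]; nlinarith [h2]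
      rw [div_le_iff₀ hm, div_mul_eq_mul_div, div_mul_eq_mul_div, le_div_iff₀ hc]
      nlinarith [mul_le_mul_of_nonneg_left hkey h1ε.le]
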